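/- Let A_L ∈ ℝ^(m×m), P symmetric positive definite, γ > 0, and suppose P·A_L + A_Lᵀ·P + I + (1/γ²)·P·E·Eᵀ·P ≺ 0 for E ∈ ℝ^(m×n). Then for every ω ∈ ℝ, the matrix jωI − A_L is invertible and ‖(jωI − A_L)⁻¹ E d‖ < γ‖d‖ for every nonzero d ∈ ℂⁿ. -/

import Mathlib

open Matrix Complex

/-- The quadratic form of a real positive definite matrix has positive real part on
nonzero complex vectors. -/
lemma qf_re_pos {m : ℕ} {Q : Matrix (Fin m) (Fin m) ℝ} (hQ : Q.PosDef)
    (x : Fin m → ℂ) (hx : x ≠ 0) : 0 < (star x ⬝ᵥ (Q.map Complex.ofReal) *ᵥ x).re := by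
  classical
  set a : Fin m → ℝ := fun i => (x i).re with ha
  set b : Fin m → ℝ := fun i => (x i).im with hb
  have hsum : (star x ⬝ᵥ (Q.map Complex.ofReal) *ᵥ x).re
      = a ⬝ᵥ Q *ᵥ a + b ⬝ᵥ Q *ᵥ b := by
    have h1 : star x ⬝ᵥ (Q.map Complex.ofReal) *ᵥ x
        = ∑ i, ∑ j, (starRingEnd ℂ) (x i) * ((Q i j : ℂ) * x j) := by
      simp [dotProduct, Matrix.mulVec, Finset.mul_sum]
    rw [h1]
    rw [Complex.re_sum]
    have h2 : ∀ i, (∑ j, (starRingEnd ℂ) (x i) * ((Q i j : ℂ) * x j)).re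
        = ∑ j, (a i * (Q i j * a j) + b i * (Q i j * b j)) := by
      intro i
      rw [Complex.re_sum]
      refine Finset.sum_congr rfl fun j _ => ?_
      simp [Complex.mul_re, Complex.mul_im, ha, hb]
    simp only [h2]
    simp [Finset.sum_add_distrib, dotProduct, Matrix.mulVec, Finset.mul_sum]
  rw [hsum]
  have hab : a ≠ 0 ∨ b ≠ 0 := by
    by_contra h
    push_neg at h
    apply hx
    funext i
    have h1 : a i = 0 := by rw [h.1]; rfl
    have h2 : b i = 0 := by rw [h.2]; rfl
    exact Complex.ext h1 h2
  have hqa : 0 ≤ a ⬝ᵥ Q *ᵥ a := by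
    have := hQ.posSemidef.dotProduct_mulVec_nonneg a; simpa using this
  have hqb : 0 ≤ b ⬝ᵥ Q *ᵥ b := by
    have := hQ.posSemidef.dotProduct_mulVec_nonneg b; simpa using this
  rcases hab with h | h
  · have := hQ.dotProduct_mulVec_pos h; simp at this; linarith
  · have := hQ.dotProduct_mulVec_pos h; simp at this; linarith

/-- Young-type bound for the cross term. -/
lemma cross_bound {n : ℕ} (γ : ℝ) (hγ : 0 < γ) (y d : Fin n → ℂ) :
    2 * (star y ⬝ᵥ d).re ≤ (γ ^ 2)⁻¹ * ∑ i, Complex.normSq (y i)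
      + γ ^ 2 * ∑ i, Complex.normSq (d i) := by
  have h1 : (star y ⬝ᵥ d).re = ∑ i, ((starRingEnd ℂ) (y i) * d i).re := by
    simp [dotProduct, Complex.re_sum]
  rw [h1, Finset.mul_sum, Finset.mul_sum, Finset.mul_sum, ← Finset.sum_add_distrib]
  refine Finset.sum_le_sum fun i _ => ?_
  have hre : ((starRingEnd ℂ) (y i) * d i).re ≤ ‖y i‖ * ‖d i‖ := by
    calc ((starRingEnd ℂ) (y i) * d i).re ≤ ‖(starRingEnd ℂ) (y i) * d i‖ :=
          Complex.re_le_norm _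
      _ = ‖y i‖ * ‖d i‖ := by rw [norm_mul, Complex.norm_conj]
  have hy : Complex.normSq (y i) = (‖y i‖)^2 := (Complex.sq_norm _).symm
  have hd : Complex.normSq (d i) = (‖d i‖)^2 := (Complex.sq_norm _).symm
  rw [hy, hd]
  have key : 2 * (‖y i‖ * ‖d i‖)
      ≤ (γ ^ 2)⁻¹ * (‖y i‖)^2 + γ ^ 2 * (‖d i‖)^2 := by
    have key2 := two_mul_le_add_sq (γ⁻¹ * ‖y i‖) (γ * ‖d i‖)
    have e1 : γ⁻¹ * ‖y i‖ * (γ * ‖d i‖)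
        = ‖y i‖ * ‖d i‖ := by
      field_simp
    have e2 : (γ⁻¹ * ‖y i‖)^2 = (γ ^ 2)⁻¹ * (‖y i‖)^2 := by
      rw [mul_pow, ← inv_pow]
    have e3 : (γ * ‖d i‖)^2 = γ ^ 2 * (‖d i‖)^2 := by ring
    nlinarith [key2, e1, e2, e3]
  linarith

/-- Hermitian forms have symmetric real parts. -/
lemma herm_re_symm {m : ℕ} (M : Matrix (Fin m) (Fin m) ℂ) (hM : Mᴴ = M)
    (u v : Fin m → ℂ) : (star u ⬝ᵥ M *ᵥ v).re = (star v ⬝ᵥ M *ᵥ u).re := by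
  have h1 : star (star u ⬝ᵥ M *ᵥ v) = star v ⬝ᵥ M *ᵥ u := by
    rw [← star_dotProduct, star_mulVec, hM, ← dotProduct_mulVec]
  calc (star u ⬝ᵥ M *ᵥ v).re = (star (star u ⬝ᵥ M *ᵥ v)).re := (Complex.conj_re _).symm
    _ = (star v ⬝ᵥ M *ᵥ u).re := by rw [h1]

lemma nsq_eq {k : ℕ} (v : Fin k → ℂ) : (star v ⬝ᵥ v).re = ∑ i, Complex.normSq (v i) := by
  simp [dotProduct, Complex.re_sum, Complex.mul_re, Complex.normSq_apply]

/-- Evaluation of the LMI quadratic form along a trajectory relation. -/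
lemma qf_eval {m n : ℕ} (γ : ℝ) (P AL : Matrix (Fin m) (Fin m) ℝ)
    (E : Matrix (Fin m) (Fin n) ℝ) (hPsymm : Pᵀ = P) (ω : ℝ)
    (x : Fin m → ℂ) (d : Fin n → ℂ)
    (hx : (((ω : ℂ) * Complex.I) • (1 : Matrix (Fin m) (Fin m) ℂ)
        - AL.map Complex.ofReal) *ᵥ x = (E.map Complex.ofReal) *ᵥ d) :
    (star x ⬝ᵥ ((-(P * AL + ALᵀ * P + 1 + (γ ^ 2)⁻¹ • (P * E * Eᵀ * P))).map Complex.ofReal) *ᵥ x).re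
      = 2 * (star (((Eᵀ * P).map Complex.ofReal) *ᵥ x) ⬝ᵥ d).re
        - (∑ i, Complex.normSq (x i))
        - (γ ^ 2)⁻¹ * ∑ i, Complex.normSq ((((Eᵀ * P).map Complex.ofReal) *ᵥ x) i) := by
  classical
  set Pc := P.map Complex.ofReal with hPc
  set Ac := AL.map Complex.ofReal with hAc
  set Ec := E.map Complex.ofReal with hEc
  set B := (Eᵀ * P).map Complex.ofReal with hB
  set y := B *ᵥ x with hy
  set c : ℂ := (ω : ℂ) * Complex.I with hc
  have hPsym' : ∀ i j, (P i j : ℂ) = (P j i : ℂ) := by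
    intro i j
    exact_mod_cast congrFun (congrFun hPsymm.symm i) j
  have hPH : Pcᴴ = Pc := by
    ext i j
    simp only [conjTranspose_apply, hPc, Matrix.map_apply, star_def, Complex.conj_ofReal]
    exact hPsym' j i
  have hS : (-(P * AL + ALᵀ * P + 1 + (γ ^ 2)⁻¹ • (P * E * Eᵀ * P))).map Complex.ofReal
      = -(Pc * Ac + Acᵀ * Pc + 1 + ((γ : ℂ) ^ 2)⁻¹ • (Pc * Ec * Ecᵀ * Pc)) := by
    ext i j
    simp only [Matrix.map_apply, Matrix.neg_apply, Matrix.add_apply, Matrix.smul_apply,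
      Matrix.mul_apply, Matrix.one_apply, Matrix.transpose_apply, smul_eq_mul, hPc, hAc, hEc]
    push_cast
    split <;> ring_nf <;> push_cast <;> ring_nf
  have hAx : Ac *ᵥ x = c • x - Ec *ᵥ d := by
    rw [Matrix.sub_mulVec, Matrix.smul_mulVec, Matrix.one_mulVec] at hx
    rw [← hx]
    exact (sub_sub_cancel _ _).symm
  have hexp : star x ⬝ᵥ ((-(P * AL + ALᵀ * P + 1 + (γ ^ 2)⁻¹ • (P * E * Eᵀ * P))).map Complex.ofReal) *ᵥ x
      = -((star x ⬝ᵥ (Pc * Ac) *ᵥ x) + (star x ⬝ᵥ (Acᵀ * Pc) *ᵥ x) + (star x ⬝ᵥ x)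
        + ((γ : ℂ) ^ 2)⁻¹ * (star x ⬝ᵥ (Pc * Ec * Ecᵀ * Pc) *ᵥ x)) := by
    rw [hS]
    simp [Matrix.add_mulVec, Matrix.neg_mulVec, Matrix.smul_mulVec, Matrix.one_mulVec,
      dotProduct_add, dotProduct_neg, dotProduct_smul, smul_eq_mul]
  have hT1 : star x ⬝ᵥ (Pc * Ac) *ᵥ x
      = c * (star x ⬝ᵥ Pc *ᵥ x) - star x ⬝ᵥ Pc *ᵥ (Ec *ᵥ d) := by
    rw [← Matrix.mulVec_mulVec, hAx, Matrix.mulVec_sub, Matrix.mulVec_smul,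
      dotProduct_sub, dotProduct_smul, smul_eq_mul]
  have hAH : Acᴴ = Acᵀ := by
    ext i j
    simp [conjTranspose_apply, hAc, Matrix.map_apply, star_def, Complex.conj_ofReal]
  have hT2a : star x ⬝ᵥ (Acᵀ * Pc) *ᵥ x = star (Ac *ᵥ x) ⬝ᵥ Pc *ᵥ x := by
    rw [← hAH, dotProduct_mulVec, ← Matrix.vecMul_vecMul, ← star_mulVec, ← dotProduct_mulVec]
  have hT2 : star x ⬝ᵥ (Acᵀ * Pc) *ᵥ x
      = -c * (star x ⬝ᵥ Pc *ᵥ x) - star (Ec *ᵥ d) ⬝ᵥ Pc *ᵥ x := by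
    rw [hT2a, hAx, star_sub, star_smul, sub_dotProduct, smul_dotProduct]
    have hcs : star c = -c := by
      rw [hc]
      simp [star_def, Complex.conj_ofReal]
    rw [hcs]
    simp [smul_eq_mul]
  have hBH : Bᴴ = Pc * Ec := by
    ext i j
    simp only [conjTranspose_apply, hB, Matrix.map_apply, star_def, Complex.conj_ofReal,
      Matrix.mul_apply, Matrix.transpose_apply, hPc, hEc]
    push_cast
    exact Finset.sum_congr rfl fun k _ => by rw [hPsym' i k]; ring
  have hu : star x ⬝ᵥ Pc *ᵥ (Ec *ᵥ d) = star y ⬝ᵥ d := by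
    rw [Matrix.mulVec_mulVec, dotProduct_mulVec, hy, star_mulVec, hBH]
  have hv : (star (Ec *ᵥ d) ⬝ᵥ Pc *ᵥ x).re = (star y ⬝ᵥ d).re := by
    have := herm_re_symm Pc hPH (Ec *ᵥ d) x
    rw [this, hu]
  have hBmap : Ecᵀ * Pc = B := by
    rw [hB, hEc, hPc, ← Matrix.transpose_map]
    exact (Matrix.map_mul (f := Complex.ofRealHom)).symm
  have hfact : Pc * Ec * Ecᵀ * Pc = Bᴴ * B := by
    rw [hBH, ← hBmap, ← Matrix.mul_assoc]
  have hT4 : star x ⬝ᵥ (Pc * Ec * Ecᵀ * Pc) *ᵥ x = star y ⬝ᵥ y := by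
    rw [hfact, ← Matrix.mulVec_mulVec, dotProduct_mulVec, ← star_mulVec, ← hy]
  rw [hexp, hT1, hT2, hT4]
  have hc2 : ((γ : ℂ) ^ 2)⁻¹ = (((γ ^ 2)⁻¹ : ℝ) : ℂ) := by push_cast; ring
  have : -((c * (star x ⬝ᵥ Pc *ᵥ x) - star x ⬝ᵥ Pc *ᵥ (Ec *ᵥ d))
        + (-c * (star x ⬝ᵥ Pc *ᵥ x) - star (Ec *ᵥ d) ⬝ᵥ Pc *ᵥ x)
        + star x ⬝ᵥ x + ((γ : ℂ) ^ 2)⁻¹ * (star y ⬝ᵥ y))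
      = (star x ⬝ᵥ Pc *ᵥ (Ec *ᵥ d) + star (Ec *ᵥ d) ⬝ᵥ Pc *ᵥ x)
        - star x ⬝ᵥ x - ((γ : ℂ) ^ 2)⁻¹ * (star y ⬝ᵥ y) := by ring
  rw [this]
  rw [hc2]
  simp only [Complex.sub_re, Complex.add_re, Complex.re_ofReal_mul]
  rw [hu, hv, nsq_eq x, nsq_eq y]
  ring

/-- The key strict gain bound along the frequency-domain relation. -/
lemma key_bound {m n : ℕ} (γ : ℝ) (hγ : 0 < γ)
    (P AL : Matrix (Fin m) (Fin m) ℝ) (E : Matrix (Fin m) (Fin n) ℝ)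
    (hP : P.PosDef)
    (hLMI : (-(P * AL + ALᵀ * P + 1 + (γ ^ 2)⁻¹ • (P * E * Eᵀ * P))).PosDef)
    (ω : ℝ) (x : Fin m → ℂ) (d : Fin n → ℂ)
    (hx : (((ω : ℂ) * Complex.I) • (1 : Matrix (Fin m) (Fin m) ℂ)
        - AL.map Complex.ofReal) *ᵥ x = (E.map Complex.ofReal) *ᵥ d)
    (hx0 : x ≠ 0) :
    ∑ i, Complex.normSq (x i) < γ ^ 2 * ∑ i, Complex.normSq (d i) := by
  have hPsymm : Pᵀ = P := by
    ext i j
    have := congrFun (congrFun hP.1 i) j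
    simpa using this
  have hpos := qf_re_pos hLMI x hx0
  rw [qf_eval γ P AL E hPsymm ω x d hx] at hpos
  have hcross := cross_bound γ hγ (((Eᵀ * P).map Complex.ofReal) *ᵥ x) d
  linarith

/-- H∞ bound: if P ≻ 0 and PA_L + A_LᵀP + I + γ⁻²·P E Eᵀ P ≺ 0, then for every ω ∈ ℝ
the matrix jωI − A_L is invertible and ‖(jωI − A_L)⁻¹ E d‖ < γ‖d‖ for every nonzero d. -/
theorem hinf_bound (m n : ℕ) (γ : ℝ) (hγ : 0 < γ)
    (P AL : Matrix (Fin m) (Fin m) ℝ) (E : Matrix (Fin m) (Fin n) ℝ)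
    (hP : P.PosDef)
    (hLMI : (-(P * AL + ALᵀ * P + 1 + (γ ^ 2)⁻¹ • (P * E * Eᵀ * P))).PosDef) :
    ∀ ω : ℝ,
      IsUnit (((ω : ℂ) * Complex.I) • (1 : Matrix (Fin m) (Fin m) ℂ)
          - AL.map Complex.ofReal).det ∧
      ∀ d : Fin n → ℂ, d ≠ 0 →
        Real.sqrt (∑ i, Complex.normSq
            (((((ω : ℂ) * Complex.I) • (1 : Matrix (Fin m) (Fin m) ℂ)
              - AL.map Complex.ofReal)⁻¹).mulVec ((E.map Complex.ofReal).mulVec d) i))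
          < γ * Real.sqrt (∑ i, Complex.normSq (d i)) := by
  intro ω
  set M := ((ω : ℂ) * Complex.I) • (1 : Matrix (Fin m) (Fin m) ℂ)
      - AL.map Complex.ofReal with hM
  have hdet : IsUnit M.det := by
    rw [isUnit_iff_ne_zero]
    intro h0
    obtain ⟨v, hv0, hv⟩ := (Matrix.exists_mulVec_eq_zero_iff).mpr h0
    have hrel : M *ᵥ v = (E.map Complex.ofReal) *ᵥ (0 : Fin n → ℂ) := by
      rw [hv, Matrix.mulVec_zero]
    have := key_bound γ hγ P AL E hP hLMI ω v 0 hrel hv0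
    simp at this
    exact absurd this (not_lt.mpr (Finset.sum_nonneg fun i _ => Complex.normSq_nonneg _))
  refine ⟨hdet, fun d hd => ?_⟩
  set x := M⁻¹ *ᵥ ((E.map Complex.ofReal) *ᵥ d) with hxdef
  have hMx : M *ᵥ x = (E.map Complex.ofReal) *ᵥ d := by
    rw [hxdef, Matrix.mulVec_mulVec, Matrix.mul_nonsing_inv _ hdet, Matrix.one_mulVec]
  have hdpos : 0 < ∑ i, Complex.normSq (d i) := by
    obtain ⟨i, hi⟩ := Function.ne_iff.mp hd
    exact Finset.sum_pos' (fun j _ => Complex.normSq_nonneg _)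
      ⟨i, Finset.mem_univ i, Complex.normSq_pos.mpr hi⟩
  by_cases hx0 : x = 0
  · rw [hx0]
    simp only [Pi.zero_apply, Complex.normSq_zero, Finset.sum_const, smul_zero]
    rw [Real.sqrt_zero]
    exact mul_pos hγ (Real.sqrt_pos.mpr hdpos)
  · have hkey := key_bound γ hγ P AL E hP hLMI ω x d hMx hx0
    have h1 : Real.sqrt (∑ i, Complex.normSq (x i))
        < Real.sqrt (γ ^ 2 * ∑ i, Complex.normSq (d i)) :=
      Real.sqrt_lt_sqrt (Finset.sum_nonneg fun i _ => Complex.normSq_nonneg _) hkey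
    rwa [Real.sqrt_mul (sq_nonneg γ), Real.sqrt_sq hγ.le] at h1
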